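/- Let K be a number field of degree n, let p be a rational prime, and let 𝔭 be a nonzero prime ideal of the ring of integers 𝒪_K lying above p. Then every nonzero element x ∈ 𝔭 satisfies ‖σ(x)‖ ≥ √n · p^{1/n}, i.e., Σ_{i=1}^n |σ_i(x)|² ≥ n · p^{2/n}. -/

import Mathlib

open NumberField Module

noncomputable section

lemma prod_abs_embeddings (K : Type*) [Field K] [NumberField K] (y : K) :
    ∏ σ : K →+* ℂ, ‖σ y‖ = |(Algebra.norm ℚ y : ℝ)| := by
  have h := congr_arg (‖·‖) (Algebra.norm_eq_prod_embeddings ℚ ℂ y)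
  rw [norm_prod] at h
  rw [Fintype.prod_equiv (RingHom.equivRatAlgHom K ℂ) (fun σ : K →+* ℂ => ‖σ y‖)
      (fun φ : K →ₐ[ℚ] ℂ => ‖φ y‖)
      (fun σ => by simp [RingHom.equivRatAlgHom_apply]), ← h, eq_ratCast,
    ← Complex.ofReal_ratCast, Complex.norm_real, Real.norm_eq_abs]

theorem norm_lower_bound_of_mem_prime_ideal
    (K : Type*) [Field K] [NumberField K]
    (p : ℕ) (hp : p.Prime)
    (P : Ideal (𝓞 K)) (hP : P.IsPrime) (hP0 : P ≠ ⊥)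
    -- `𝔭` lies above `p` : `𝔭 ∩ ℤ = pℤ`
    (habove : Ideal.comap (algebraMap ℤ (𝓞 K)) P = Ideal.span {(p : ℤ)}) :
    ∀ x ∈ P, x ≠ 0 →
      (finrank ℚ K : ℝ) * (p : ℝ) ^ ((2 : ℝ) / finrank ℚ K) ≤
        ∑ σ : K →+* ℂ, ‖σ (algebraMap (𝓞 K) K x)‖ ^ 2 := by
  intro x hxP hx0
  have hnpos : 0 < finrank ℚ K := finrank_pos
  set n := finrank ℚ K with hn
  set y : K := algebraMap (𝓞 K) K x with hy
  -- Step 1: p ∣ absNorm P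
  have hpmem : (algebraMap ℤ (𝓞 K)) (p : ℤ) ∈ P := by
    rw [← Ideal.mem_comap, habove]
    exact Ideal.mem_span_singleton_self _
  obtain ⟨d, hdvd1⟩ : ∃ d, Ideal.absNorm P ∣ p ^ d := by
    have hle : Ideal.span {(algebraMap ℤ (𝓞 K)) (p : ℤ)} ≤ P :=
      (Ideal.span_singleton_le_iff_mem _).mpr hpmem
    have h2 := Ideal.absNorm_dvd_absNorm_of_le hle
    rw [Ideal.absNorm_span_singleton,
      Algebra.norm_algebraMap_of_basis (Module.Free.chooseBasis ℤ (𝓞 K)), ← Int.natCast_pow,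
      Int.natAbs_natCast] at h2
    exact ⟨_, h2⟩
  have hpdvdN : p ∣ Ideal.absNorm P := by
    by_contra h
    have hcop : Nat.Coprime (Ideal.absNorm P) (p ^ d) :=
      Nat.Coprime.pow_right _ ((hp.coprime_iff_not_dvd.mpr h).symm)
    exact hP.ne_top (Ideal.absNorm_eq_one_iff.mp (hcop.eq_one_of_dvd hdvd1))
  -- Step 2: p ∣ Algebra.norm ℤ x, hence p ≤ |N(y)|
  have hdvdx : (p : ℤ) ∣ Algebra.norm ℤ x :=
    dvd_trans (Int.natCast_dvd_natCast.mpr hpdvdN) (Ideal.absNorm_dvd_norm_of_mem hxP)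
  have hy0 : y ≠ 0 := by
    simpa [hy] using (map_ne_zero_iff _ (NumberField.RingOfIntegers.coe_injective)).mpr hx0
  have hN0 : Algebra.norm ℚ y ≠ 0 := (Algebra.norm_ne_zero_iff).mpr hy0
  have hNint : (Algebra.norm ℤ x : ℚ) = Algebra.norm ℚ y := Algebra.coe_norm_int x
  have hNx0 : Algebra.norm ℤ x ≠ 0 := by
    intro h; rw [h] at hNint; exact hN0 (by exact_mod_cast hNint.symm)
  have hpleN : (p : ℝ) ≤ |(Algebra.norm ℚ y : ℝ)| := by
    have h1 : (p : ℤ) ≤ |Algebra.norm ℤ x| :=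
      Int.le_of_dvd (abs_pos.mpr hNx0) ((dvd_abs _ _).mpr hdvdx)
    have h2 : ((Algebra.norm ℤ x : ℚ) : ℝ) = ((Algebra.norm ℚ y : ℚ) : ℝ) :=
      congrArg (fun q : ℚ => (q : ℝ)) hNint
    calc (p : ℝ) ≤ |((Algebra.norm ℤ x : ℤ) : ℝ)| := by exact_mod_cast h1
      _ = |(Algebra.norm ℚ y : ℝ)| := by
          rw [← h2]; norm_cast
  set N : ℝ := |(Algebra.norm ℚ y : ℝ)| with hNdef
  have hNnonneg : 0 ≤ N := abs_nonneg _
  have hprod : ∏ σ : K →+* ℂ, ‖σ y‖ = N := prod_abs_embeddings K y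
  -- AM-GM
  have hcard : Fintype.card (K →+* ℂ) = n := NumberField.Embeddings.card K ℂ
  have hAMGM := Real.geom_mean_le_arith_mean_weighted Finset.univ
      (fun _ : K →+* ℂ => (n : ℝ)⁻¹) (fun σ => ‖σ y‖ ^ 2)
      (fun _ _ => by positivity)
      (by rw [Finset.sum_const, Finset.card_univ, hcard, nsmul_eq_mul]
          field_simp)
      (fun _ _ => by positivity)
  have hprodpow : ∏ σ : K →+* ℂ, (‖σ y‖ ^ 2) ^ ((n : ℝ)⁻¹) =
      N ^ ((2 : ℝ) / n) := by
    rw [Real.finset_prod_rpow _ _ (fun _ _ => by positivity), Finset.prod_pow, hprod,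
      ← Real.rpow_natCast N 2, ← Real.rpow_mul hNnonneg]
    norm_num [div_eq_mul_inv]
  have hple : (p : ℝ) ^ ((2 : ℝ) / n) ≤ N ^ ((2 : ℝ) / n) :=
    Real.rpow_le_rpow (by positivity) hpleN (by positivity)
  have hsum : ∑ σ : K →+* ℂ, (n : ℝ)⁻¹ * (‖σ y‖ ^ 2) =
      (n : ℝ)⁻¹ * ∑ σ : K →+* ℂ, ‖σ y‖ ^ 2 := by
    rw [Finset.mul_sum]
  have key : (p : ℝ) ^ ((2 : ℝ) / n) ≤ (n : ℝ)⁻¹ * ∑ σ : K →+* ℂ, ‖σ y‖ ^ 2 := by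
    calc (p : ℝ) ^ ((2 : ℝ) / n) ≤ N ^ ((2 : ℝ) / n) := hple
      _ = ∏ σ : K →+* ℂ, (‖σ y‖ ^ 2) ^ ((n : ℝ)⁻¹) := hprodpow.symm
      _ ≤ ∑ σ : K →+* ℂ, (n : ℝ)⁻¹ * (‖σ y‖ ^ 2) := hAMGM
      _ = _ := hsum
  have hnR : (0 : ℝ) < n := by exact_mod_cast hnpos
  calc (n : ℝ) * (p : ℝ) ^ ((2 : ℝ) / n)
      ≤ (n : ℝ) * ((n : ℝ)⁻¹ * ∑ σ : K →+* ℂ, ‖σ y‖ ^ 2) :=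
        mul_le_mul_of_nonneg_left key (le_of_lt hnR)
    _ = ∑ σ : K →+* ℂ, ‖σ y‖ ^ 2 := by
        rw [← mul_assoc, mul_inv_cancel₀ (ne_of_gt hnR), one_mul]
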